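/- Let A be an alphabet, t an extra letter, and let N be the kernel of the homomorphism F(A ∪ {t}) → ℤ sending t to 1 and each a ∈ A to 0. Then N is a free group with free basis the set {tᵏ a t⁻ᵏ : a ∈ A, k ∈ ℤ}. -/

import Mathlib

/-- The exponent-sum-of-`t` homomorphism `F(A ∪ {t}) → ℤ`. -/
noncomputable def expSum (A : Type*) : FreeGroup (A ⊕ Unit) →* Multiplicative ℤ :=
  FreeGroup.lift (Sum.elim (fun _ => (1 : Multiplicative ℤ)) (fun _ => Multiplicative.ofAdd 1))

/-- The stable letter `t`. -/
noncomputable def tGen (A : Type*) : FreeGroup (A ⊕ Unit) := FreeGroup.of (Sum.inr ())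

lemma conj_mem_ker (A : Type*) (a : A) (k : ℤ) :
    tGen A ^ k * FreeGroup.of (Sum.inl a) * tGen A ^ (-k) ∈ (expSum A).ker := by
  simp [MonoidHom.mem_ker, expSum, tGen]

/-- Shift action of ℤ on `FreeGroup (A × ℤ)`. -/
noncomputable def shiftAut (A : Type*) : Multiplicative ℤ →* MulAut (FreeGroup (A × ℤ)) where
  toFun n := FreeGroup.freeGroupCongr ((Equiv.refl A).prodCongr (Equiv.addRight n.toAdd))
  map_one' := by
    ext x
    simp [FreeGroup.freeGroupCongr]
  map_mul' n m := by
    ext x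
    simp only [MulAut.mul_apply]
    show FreeGroup.map _ x = FreeGroup.map _ (FreeGroup.map _ x)
    rw [FreeGroup.map.comp]
    congr 1
    ext ⟨a, j⟩; simp [add_assoc, add_comm, add_left_comm]

/-- The lifted map to the semidirect product. -/
noncomputable def phiSD (A : Type*) :
    FreeGroup (A ⊕ Unit) →* FreeGroup (A × ℤ) ⋊[shiftAut A] Multiplicative ℤ :=
  FreeGroup.lift (Sum.elim
    (fun a => SemidirectProduct.inl (FreeGroup.of (a, (0 : ℤ))))
    (fun _ => SemidirectProduct.inr (Multiplicative.ofAdd 1)))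

/-- The inverse image map. -/
noncomputable def Fdash (A : Type*) : FreeGroup (A × ℤ) →* FreeGroup (A ⊕ Unit) :=
  FreeGroup.lift (fun p : A × ℤ =>
    tGen A ^ p.2 * FreeGroup.of (Sum.inl p.1) * tGen A ^ (-p.2))

lemma shiftAut_of (A : Type*) (n : Multiplicative ℤ) (a : A) (j : ℤ) :
    shiftAut A n (FreeGroup.of (a, j)) = FreeGroup.of (a, j + n.toAdd) := by
  simp [shiftAut]

lemma Fdash_equivariant (A : Type*) (n : Multiplicative ℤ) :
    (Fdash A).comp ((shiftAut A) n).toMonoidHom =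
      (MulAut.conj (tGen A ^ n.toAdd)).toMonoidHom.comp (Fdash A) := by
  apply FreeGroup.ext_hom
  rintro ⟨a, j⟩
  simp only [MonoidHom.comp_apply, MulEquiv.coe_toMonoidHom, shiftAut_of, MulAut.conj_apply]
  simp only [Fdash, FreeGroup.lift_apply_of]
  rw [neg_add, zpow_add, zpow_add]
  group

/-- The retraction `N ⋊ ℤ →* FreeGroup (A ⊕ Unit)`. -/
noncomputable def theta (A : Type*) :
    FreeGroup (A × ℤ) ⋊[shiftAut A] Multiplicative ℤ →* FreeGroup (A ⊕ Unit) :=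
  SemidirectProduct.lift (Fdash A) (zpowersHom _ (tGen A)) (Fdash_equivariant A)

lemma theta_comp_phiSD (A : Type*) : (theta A).comp (phiSD A) = MonoidHom.id _ := by
  apply FreeGroup.ext_hom
  rintro (a | ⟨⟩) <;>
    simp [theta, phiSD, Fdash, zpowersHom_apply, tGen]

lemma rightHom_comp_phiSD (A : Type*) :
    SemidirectProduct.rightHom.comp (phiSD A) = expSum A := by
  apply FreeGroup.ext_hom
  rintro (a | ⟨⟩) <;> simp [phiSD, expSum]

lemma phiSD_comp_Fdash (A : Type*) :
    (phiSD A).comp (Fdash A) = SemidirectProduct.inl := by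
  apply FreeGroup.ext_hom
  rintro ⟨a, k⟩
  simp only [MonoidHom.comp_apply, Fdash, FreeGroup.lift_apply_of, map_mul, map_zpow]
  have ht : phiSD A (tGen A) = SemidirectProduct.inr (Multiplicative.ofAdd 1) := by
    simp [phiSD, tGen]
  have ha : phiSD A (FreeGroup.of (Sum.inl a)) =
      SemidirectProduct.inl (FreeGroup.of (a, (0 : ℤ))) := by
    simp [phiSD]
  rw [ht, ha]
  have h1 : ∀ j : ℤ, SemidirectProduct.inr (φ := shiftAut A) (Multiplicative.ofAdd (1:ℤ)) ^ j
      = SemidirectProduct.inr (Multiplicative.ofAdd j) := by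
    intro j
    rw [← map_zpow]
    congr 1
    rw [← ofAdd_zsmul, smul_eq_mul, mul_one]
  rw [h1, h1]
  have h2 : Multiplicative.ofAdd (-k) = (Multiplicative.ofAdd k)⁻¹ := rfl
  rw [h2, ← SemidirectProduct.inl_aut, shiftAut_of]
  norm_num

/-- The kernel of the exponent-sum map is free with basis `{tᵏ a t⁻ᵏ : a ∈ A, k ∈ ℤ}`. -/
theorem ker_expSum_free (A : Type*) :
    Function.Bijective
      (FreeGroup.lift (fun p : A × ℤ =>
        (⟨tGen A ^ p.2 * FreeGroup.of (Sum.inl p.1) * tGen A ^ (-p.2),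
          conj_mem_ker A p.1 p.2⟩ : (expSum A).ker)) :
        FreeGroup (A × ℤ) →* (expSum A).ker) := by
  set L := (FreeGroup.lift (fun p : A × ℤ =>
        (⟨tGen A ^ p.2 * FreeGroup.of (Sum.inl p.1) * tGen A ^ (-p.2),
          conj_mem_ker A p.1 p.2⟩ : (expSum A).ker)) :
        FreeGroup (A × ℤ) →* (expSum A).ker) with hL
  have hval : ((expSum A).ker.subtype).comp L = Fdash A := by
    apply FreeGroup.ext_hom
    rintro ⟨a, k⟩
    simp [hL, Fdash]
  constructor
  · intro u v huv
    have h1 : Fdash A u = Fdash A v := by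
      have := congrArg ((expSum A).ker.subtype) huv
      rwa [← MonoidHom.comp_apply, ← MonoidHom.comp_apply, hval] at this
    have h2 : (phiSD A) (Fdash A u) = (phiSD A) (Fdash A v) := by rw [h1]
    rw [← MonoidHom.comp_apply, ← MonoidHom.comp_apply, phiSD_comp_Fdash] at h2
    exact SemidirectProduct.inl_injective h2
  · intro x
    have hker : SemidirectProduct.rightHom (phiSD A x.1) = 1 := by
      rw [← MonoidHom.comp_apply, rightHom_comp_phiSD]
      exact x.2
    set u := (phiSD A x.1).left with hu
    have hinl : phiSD A x.1 = SemidirectProduct.inl u := by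
      ext
      · simp [hu]
      · simp only [SemidirectProduct.rightHom_eq_right] at hker
        simp [hker]
    refine ⟨u, ?_⟩
    apply Subtype.ext
    have hLu : (↑(L u) : FreeGroup (A ⊕ Unit)) = Fdash A u := by
      simpa using DFunLike.congr_fun hval u
    rw [hLu]
    have : theta A (phiSD A x.1) = x.1 := by
      rw [← MonoidHom.comp_apply, theta_comp_phiSD]; rfl
    rw [hinl] at this
    exact (SemidirectProduct.lift_inl (Fdash A) (zpowersHom _ (tGen A)) (Fdash_equivariant A) u).symm.trans this
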